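/- For the uniform pmf θ = (1/M)·1_M with M ≥ 3, the missing-mass CCRB for unbiased estimators equals B(θ) = (1/N)·((M-1)/M)^{2N}·(M-1)^3/(M^4 - 2M^3). -/

import Mathlib

open Finset Matrix

/-- For the uniform pmf θ = (1/M)·1 with M ≥ 3, the unbiased missing-mass CCRB
(1/N) ∑_m (1-θ_m)^{2N} [U (Uᵀ D(θ) U)⁻¹ Uᵀ]_{mm} equals
(1/N)((M-1)/M)^{2N}(M-1)³/(M⁴-2M³). -/
theorem mmCCRB_uniform (M N : ℕ) (hM : 3 ≤ M) (hN : 0 < N)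
    (θ : Fin M → ℝ) (hθ : ∀ i, θ i = 1 / M)
    (U : Matrix (Fin M) (Fin (M - 1)) ℝ)
    (hU1 : Matrix.vecMul (fun _ => (1 : ℝ)) U = 0)
    (hUU : U.transpose * U = 1)
    (D : Matrix (Fin M) (Fin M) ℝ)
    (hD : D = Matrix.diagonal fun m =>
      (∑ l ∈ Finset.univ.erase m, 1 / (θ l * (1 - θ m))) - 1 / (1 - θ m) ^ 2) :
    (1 / N : ℝ) * ∑ m, (1 - θ m) ^ (2 * N) *
        (U * (U.transpose * D * U)⁻¹ * U.transpose) m m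
      = (1 / N : ℝ) * (((M : ℝ) - 1) / M) ^ (2 * N) * ((M : ℝ) - 1) ^ 3
          / ((M : ℝ) ^ 4 - 2 * (M : ℝ) ^ 3) := by
  have hM3 : (3 : ℝ) ≤ (M : ℝ) := by exact_mod_cast hM
  have hM0 : (M : ℝ) ≠ 0 := by linarith
  have hM1 : (M : ℝ) - 1 ≠ 0 := by linarith
  have hM2 : (M : ℝ) - 2 ≠ 0 := by linarith
  set c : ℝ := (M : ℝ) ^ 3 * ((M : ℝ) - 2) / ((M : ℝ) - 1) ^ 2 with hc
  have hc0 : c ≠ 0 := by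
    rw [hc]
    have h1 : (0:ℝ) < (M : ℝ) ^ 3 * ((M : ℝ) - 2) := by
      apply mul_pos (by positivity) (by linarith)
    have h2 : (0:ℝ) < ((M : ℝ) - 1) ^ 2 := by positivity
    positivity
  have hθm : ∀ m : Fin M, 1 - θ m = ((M : ℝ) - 1) / M := by
    intro m
    rw [hθ m]; field_simp
  -- D is a scalar matrix
  have hD' : D = c • (1 : Matrix (Fin M) (Fin M) ℝ) := by
    rw [hD]
    ext i j
    rcases eq_or_ne i j with rfl | hij
    · simp only [Matrix.diagonal_apply_eq, Matrix.smul_apply, Matrix.one_apply_eq, smul_eq_mul,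
        mul_one]
      have hterm : ∀ l ∈ Finset.univ.erase i, 1 / (θ l * (1 - θ i))
          = (M : ℝ) ^ 2 / ((M : ℝ) - 1) := by
        intro l _
        rw [hθ l, hθm i]
        field_simp
      rw [Finset.sum_congr rfl hterm, Finset.sum_const]
      have hcard : ((Finset.univ : Finset (Fin M)).erase i).card = M - 1 := by
        rw [Finset.card_erase_of_mem (Finset.mem_univ i), Finset.card_univ, Fintype.card_fin]
      rw [hcard, hθm i]
      have hMc : ((M - 1 : ℕ) : ℝ) = (M : ℝ) - 1 := by
        have : 1 ≤ M := by omega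
        push_cast [this]; ring
      rw [nsmul_eq_mul, hMc, hc]
      rw [div_pow]
      field_simp
      ring
    · simp [Matrix.diagonal_apply_ne _ hij, Matrix.one_apply_ne hij]
  -- the middle matrix and its inverse
  have hmid : U.transpose * D * U = c • (1 : Matrix (Fin (M-1)) (Fin (M-1)) ℝ) := by
    rw [hD', Matrix.mul_smul, Matrix.smul_mul, Matrix.mul_one, hUU]
  have hinv : (U.transpose * D * U)⁻¹ = c⁻¹ • (1 : Matrix (Fin (M-1)) (Fin (M-1)) ℝ) := by
    rw [hmid]
    apply Matrix.inv_eq_left_inv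
    rw [Matrix.smul_mul, Matrix.mul_smul, Matrix.one_mul, smul_smul, inv_mul_cancel₀ hc0,
      one_smul]
  have hexpr : U * (U.transpose * D * U)⁻¹ * U.transpose
      = c⁻¹ • (U * U.transpose) := by
    rw [hinv, Matrix.mul_smul, Matrix.mul_one, Matrix.smul_mul]
  -- the trace
  have htr : ∑ m, (U * U.transpose) m m = (M : ℝ) - 1 := by
    have h1 : ∑ m, (U * U.transpose) m m = Matrix.trace (U * U.transpose) := rfl
    rw [h1, Matrix.trace_mul_comm, hUU, Matrix.trace_one]
    have : 1 ≤ M := by omega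
    simp [Fintype.card_fin]
    push_cast [this]; ring
  rw [hexpr]
  have hsum : ∑ m, (1 - θ m) ^ (2 * N) * (c⁻¹ • (U * U.transpose)) m m
      = (((M : ℝ) - 1) / M) ^ (2 * N) * c⁻¹ * (((M : ℝ) - 1)) := by
    have : ∀ m : Fin M, (1 - θ m) ^ (2 * N) * (c⁻¹ • (U * U.transpose)) m m
        = (((M : ℝ) - 1) / M) ^ (2 * N) * c⁻¹ * (U * U.transpose) m m := by
      intro m
      rw [hθm m]
      simp [Matrix.smul_apply, smul_eq_mul]
      ring
    rw [Finset.sum_congr rfl (fun m _ => this m), ← Finset.mul_sum, htr]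
  have hden : (M : ℝ) ^ 4 - 2 * (M : ℝ) ^ 3 ≠ 0 := by
    have h : (M : ℝ) ^ 4 - 2 * (M : ℝ) ^ 3 = (M : ℝ) ^ 3 * ((M : ℝ) - 2) := by ring
    rw [h]
    exact mul_ne_zero (pow_ne_zero _ hM0) hM2
  have key : c⁻¹ * ((M : ℝ) - 1) = ((M : ℝ) - 1) ^ 3 / ((M : ℝ) ^ 4 - 2 * (M : ℝ) ^ 3) := by
    rw [hc]
    field_simp
  rw [hsum, mul_assoc, key]
  ring
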